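/- For every integer d ≥ 1 there is a constant C = C(d) > 0 such that the following holds. Let P ⊆ ℝ^d (with the Euclidean metric) be a finite set of n ≥ 2 points with spread Φ, and let ε ∈ (0,1). Then there exist two directed graphs G_{1/2} = (P, E_{1/2}) and G_ε = (P, E_ε) with |E_{1/2}| ≤ C·n·log₂(2Φ) and |E_ε| ≤ C·ε^{−d}·n·log₂(2Φ), such that for every query point q ∈ ℝ^d: (a) for every p ∈ P with dist(q, p) > (3/2)·dist(q, P), there is an edge (p, p′) ∈ E_{1/2} with dist(q, p′) ≤ (1/8)·dist(q, p) + dist(q, P); and (b) for every p ∈ P with (1 + ε)·dist(q, P) < dist(q, p) ≤ 3·dist(q, P), there is an edge (p, p′) ∈ E_ε with dist(q, p′) ≤ (1 + ε)·dist(q, P). -/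

import Mathlib

open Metric MeasureTheory Real

lemma packing (d : ℕ) (hd : 1 ≤ d) (s : Finset (EuclideanSpace ℝ (Fin d)))
    (x : EuclideanSpace ℝ (Fin d)) (R r : ℝ) (hr : 0 < r) (hR0 : 0 ≤ R)
    (hR : ∀ y ∈ s, dist x y ≤ R)
    (hsep : ∀ y ∈ s, ∀ z ∈ s, y ≠ z → r ≤ dist y z) :
    (s.card : ℝ) ≤ ((2 * R + r) / r) ^ d := by
  haveI : Nontrivial (EuclideanSpace ℝ (Fin d)) :=
    Module.nontrivial_of_finrank_pos (R := ℝ)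
      (by rw [finrank_euclideanSpace_fin]; omega)
  set v := volume (ball (0 : EuclideanSpace ℝ (Fin d)) 1) with hv
  have hv0 : v ≠ 0 := (measure_ball_pos volume _ one_pos).ne'
  have hvt : v ≠ ⊤ := measure_ball_lt_top.ne
  have hball : ∀ y : EuclideanSpace ℝ (Fin d), ∀ ρ : ℝ, 0 ≤ ρ →
      volume (ball y ρ) = ENNReal.ofReal (ρ ^ d) * v := by
    intro y ρ hρ
    rw [Measure.addHaar_ball volume y hρ, finrank_euclideanSpace_fin]
  have hdisj : (↑s : Set (EuclideanSpace ℝ (Fin d))).PairwiseDisjoint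
      (fun y => ball y (r / 2)) := by
    intro y hy z hz hyz
    apply ball_disjoint_ball
    rw [← add_div, add_self_div_two]
    exact hsep y hy z hz hyz
  have hsum : volume (⋃ y ∈ s, ball y (r / 2)) = s.card * (ENNReal.ofReal ((r/2) ^ d) * v) := by
    rw [measure_biUnion_finset hdisj (fun y _ => measurableSet_ball)]
    simp only [hball _ (r/2) (by positivity)]
    rw [Finset.sum_const, nsmul_eq_mul]
  have hsub : (⋃ y ∈ s, ball y (r / 2)) ⊆ ball x (R + r / 2) := by
    intro w hw
    simp only [Set.mem_iUnion, mem_ball] at hw ⊢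
    obtain ⟨y, hy, hwy⟩ := hw
    calc dist w x ≤ dist w y + dist y x := dist_triangle _ _ _
    _ < r / 2 + R := by rw [dist_comm y x]; linarith [hR y hy]
    _ = R + r / 2 := by ring
  have key : (s.card : ENNReal) * ENNReal.ofReal ((r/2) ^ d) * v ≤
      ENNReal.ofReal ((R + r/2) ^ d) * v := by
    rw [mul_assoc, ← hsum, ← hball x _ (by positivity)]
    exact measure_mono hsub
  have key2 : (s.card : ENNReal) * ENNReal.ofReal ((r/2) ^ d) ≤
      ENNReal.ofReal ((R + r/2) ^ d) :=
    (ENNReal.mul_le_mul_iff_left hv0 hvt).mp key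
  -- wrong direction: le_of_mul_le_mul_right cancels on the right? check
  have key3 : (s.card : ℝ) * (r/2) ^ d ≤ (R + r/2) ^ d := by
    rw [← ENNReal.ofReal_natCast s.card, ← ENNReal.ofReal_mul (by positivity)] at key2
    exact (ENNReal.ofReal_le_ofReal_iff (by positivity)).mp key2
  have h2 : ((2 * R + r) / r) ^ d = (R + r/2) ^ d / (r/2) ^ d := by
    rw [← div_pow]
    congr 1
    field_simp
  rw [h2, le_div_iff₀ (by positivity)]
  exact key3

lemma exists_net {X : Type*} [MetricSpace X] (A : Finset X) (r : ℝ) (hr : 0 < r) :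
    ∃ M ⊆ A, (∀ y ∈ M, ∀ z ∈ M, y ≠ z → r ≤ dist y z) ∧
      ∀ a ∈ A, ∃ m ∈ M, dist a m < r := by
  classical
  set T := A.powerset.filter (fun M => ∀ y ∈ M, ∀ z ∈ M, y ≠ z → r ≤ dist y z) with hT
  have hne : T.Nonempty := ⟨∅, by simp [hT]⟩
  obtain ⟨M, hM, hmax⟩ := T.exists_max_image Finset.card hne
  rw [hT, Finset.mem_filter, Finset.mem_powerset] at hM
  refine ⟨M, hM.1, hM.2, ?_⟩
  intro a ha
  by_contra hcon
  push_neg at hcon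
  have haM : a ∉ M := fun h => absurd (hcon a h) (by rw [dist_self]; exact not_le.mpr hr)
  have hram : ∀ m ∈ M, r ≤ dist a m := hcon
  have hsep' : ∀ y ∈ insert a M, ∀ z ∈ insert a M, y ≠ z → r ≤ dist y z := by
    intro y hy z hz hyz
    rcases Finset.mem_insert.mp hy with rfl | hy'
    · rcases Finset.mem_insert.mp hz with rfl | hz'
      · exact absurd rfl hyz
      · exact hram z hz'
    · rcases Finset.mem_insert.mp hz with rfl | hz'
      · rw [dist_comm]; exact hram y hy'
      · exact hM.2 y hy' z hz' hyz
  have hmem : insert a M ∈ T := by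
    rw [hT, Finset.mem_filter, Finset.mem_powerset]
    exact ⟨Finset.insert_subset ha hM.1, hsep'⟩
  have := hmax _ hmem
  rw [Finset.card_insert_of_notMem haM] at this
  omega

lemma ring_cover (d : ℕ) (hd : 1 ≤ d) (Q : Finset (EuclideanSpace ℝ (Fin d)))
    (p : EuclideanSpace ℝ (Fin d)) (t c D : ℝ) (ht : 0 < t) (hc : 0 < c)
    (hcd : ∀ s ∈ Q, c ≤ dist p s) (hD : ∀ s ∈ Q, dist p s ≤ D) (hcD : c ≤ D) :
    ∃ N ⊆ Q, (∀ s ∈ Q, ∃ m ∈ N, dist s m ≤ t * dist p s) ∧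
      (N.card : ℝ) ≤ (4 / t + 1) ^ d * ((Int.log 2 D - Int.log 2 c : ℤ) + 1) := by
  classical
  set f : EuclideanSpace ℝ (Fin d) → ℤ := fun s => Int.log 2 (dist p s) with hf
  choose g hg1 hg2 hg3 using fun i : ℤ =>
    exists_net (Q.filter (fun s => f s = i)) (t * (2:ℝ) ^ i)
      (by positivity)
  set I := Q.image f with hI
  refine ⟨I.biUnion g, ?_, ?_, ?_⟩
  · intro x hx
    obtain ⟨i, _, hxg⟩ := Finset.mem_biUnion.mp hx
    exact (Finset.mem_filter.mp (hg1 i hxg)).1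
  · intro s hs
    have hds : 0 < dist p s := lt_of_lt_of_le hc (hcd s hs)
    have hsf : s ∈ Q.filter (fun x => f x = f s) := by
      simp [Finset.mem_filter, hs]
    obtain ⟨m, hm, hdm⟩ := hg3 (f s) s hsf
    refine ⟨m, Finset.mem_biUnion.mpr ⟨f s, Finset.mem_image_of_mem f hs, hm⟩, ?_⟩
    have h2 : (2:ℝ) ^ (f s) ≤ dist p s := Int.zpow_log_le_self (by norm_num) hds
    calc dist s m ≤ t * (2:ℝ) ^ (f s) := hdm.le
    _ ≤ t * dist p s := by nlinarith
  · have hcard1 : ∀ i ∈ I, ((g i).card : ℝ) ≤ (4 / t + 1) ^ d := by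
      intro i hi
      have hpack := packing d hd (g i) p (2 * (2:ℝ) ^ i) (t * (2:ℝ) ^ i)
        (by positivity) (by positivity)
        (by
          intro y hy
          have hy' := Finset.mem_filter.mp (hg1 i hy)
          have hdy : 0 < dist p y := lt_of_lt_of_le hc (hcd y hy'.1)
          have hlt := Int.lt_zpow_succ_log_self (b := 2) (by norm_num) (dist p y)
          rw [show Int.log 2 (dist p y) = i from hy'.2] at hlt
          push_cast at hlt
          rw [zpow_add_one₀ (by norm_num : (2:ℝ) ≠ 0) i] at hlt
          linarith)
        (hg2 i)
      have heq : ((2 * (2 * (2:ℝ) ^ i) + t * 2 ^ i) / (t * 2 ^ i)) = 4 / t + 1 := by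
        have h2i : (0:ℝ) < (2:ℝ) ^ i := by positivity
        field_simp
        ring
      rwa [heq] at hpack
    have hIcard : (I.card : ℝ) ≤ ((Int.log 2 D - Int.log 2 c : ℤ) + 1 : ℤ) := by
      have hsub : I ⊆ Finset.Icc (Int.log 2 c) (Int.log 2 D) := by
        intro i hi
        obtain ⟨s, hs, rfl⟩ := Finset.mem_image.mp hi
        have hds : 0 < dist p s := lt_of_lt_of_le hc (hcd s hs)
        rw [Finset.mem_Icc]
        exact ⟨Int.log_mono_right hc (hcd s hs),
          Int.log_mono_right hds (hD s hs)⟩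
      have := Finset.card_le_card hsub
      rw [Int.card_Icc] at this
      have h2 : ((Int.log 2 D + 1 - Int.log 2 c).toNat : ℤ) ≤ Int.log 2 D - Int.log 2 c + 1 := by
        rcases le_or_gt (Int.log 2 c) (Int.log 2 D + 1) with h | h
        · rw [Int.toNat_of_nonneg (by omega)]; omega
        · rw [Int.toNat_of_nonpos (by omega)]
          have : Int.log 2 c ≤ Int.log 2 D := Int.log_mono_right hc hcD
          omega
      calc (I.card : ℝ) ≤ ((Int.log 2 D + 1 - Int.log 2 c).toNat : ℝ) := by exact_mod_cast this
      _ ≤ _ := by exact_mod_cast h2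
    calc ((I.biUnion g).card : ℝ) ≤ ∑ i ∈ I, ((g i).card : ℝ) := by
          exact_mod_cast Finset.card_biUnion_le
    _ ≤ ∑ i ∈ I, (4 / t + 1) ^ d := Finset.sum_le_sum hcard1
    _ = I.card * (4 / t + 1) ^ d := by rw [Finset.sum_const, nsmul_eq_mul]
    _ ≤ ((Int.log 2 D - Int.log 2 c : ℤ) + 1) * (4 / t + 1) ^ d := by
        apply mul_le_mul_of_nonneg_right _ (by positivity)
        exact_mod_cast hIcard
    _ = _ := by push_cast; ring

theorem stmt_14 (d : ℕ) (hd : 1 ≤ d) :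
    ∃ C : ℝ, 0 < C ∧
      ∀ P : Finset (EuclideanSpace ℝ (Fin d)), 2 ≤ P.card →
      ∀ Φ : ℝ,
        Φ = Metric.diam (P : Set (EuclideanSpace ℝ (Fin d))) /
              sInf {r : ℝ | ∃ x ∈ P, ∃ y ∈ P, x ≠ y ∧ r = dist x y} →
      ∀ ε : ℝ, ε ∈ Set.Ioo (0 : ℝ) 1 →
      ∃ E₁ E₂ : Finset (EuclideanSpace ℝ (Fin d) × EuclideanSpace ℝ (Fin d)),
        (∀ e ∈ E₁, e.1 ∈ P ∧ e.2 ∈ P) ∧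
        (∀ e ∈ E₂, e.1 ∈ P ∧ e.2 ∈ P) ∧
        (E₁.card : ℝ) ≤ C * P.card * Real.logb 2 (2 * Φ) ∧
        (E₂.card : ℝ) ≤ C / ε ^ d * P.card * Real.logb 2 (2 * Φ) ∧
        (∀ q : EuclideanSpace ℝ (Fin d),
          (∀ p ∈ P,
            3 / 2 * Metric.infDist q (P : Set (EuclideanSpace ℝ (Fin d))) < dist q p →
            ∃ p', (p, p') ∈ E₁ ∧
              dist q p' ≤ 1 / 8 * dist q p +
                Metric.infDist q (P : Set (EuclideanSpace ℝ (Fin d)))) ∧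
          (∀ p ∈ P,
            (1 + ε) * Metric.infDist q (P : Set (EuclideanSpace ℝ (Fin d))) <
              dist q p →
            dist q p ≤ 3 * Metric.infDist q (P : Set (EuclideanSpace ℝ (Fin d))) →
            ∃ p', (p, p') ∈ E₂ ∧
              dist q p' ≤
                (1 + ε) * Metric.infDist q (P : Set (EuclideanSpace ℝ (Fin d))))) := by
  classical
  refine ⟨3 * 55 ^ d, by positivity, ?_⟩
  intro P hP Φ hΦ ε hε
  obtain ⟨hε0, hε1⟩ := hε
  -- setup : closest pair distance c and diameter D
  set c := sInf {r : ℝ | ∃ x ∈ P, ∃ y ∈ P, x ≠ y ∧ r = dist x y} with hcdef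
  set D := Metric.diam (P : Set (EuclideanSpace ℝ (Fin d))) with hDdef
  set S := {r : ℝ | ∃ x ∈ P, ∃ y ∈ P, x ≠ y ∧ r = dist x y} with hSdef
  have hSF : S = ↑(((P ×ˢ P).filter (fun pr => pr.1 ≠ pr.2)).image
      (fun pr => dist pr.1 pr.2)) := by
    ext r
    simp only [hSdef, Set.mem_setOf_eq, Finset.coe_image, Set.mem_image, Finset.mem_coe,
      Finset.mem_filter, Finset.mem_product]
    constructor
    · rintro ⟨x, hx, y, hy, hxy, rfl⟩
      exact ⟨(x, y), ⟨⟨hx, hy⟩, hxy⟩, rfl⟩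
    · rintro ⟨⟨x, y⟩, ⟨⟨hx, hy⟩, hxy⟩, rfl⟩
      exact ⟨x, hx, y, hy, hxy, rfl⟩
  have hSfin : S.Finite := by rw [hSF]; exact Finset.finite_toSet _
  have hSne : S.Nonempty := by
    obtain ⟨x, hx, y, hy, hxy⟩ := Finset.one_lt_card.mp (by omega : 1 < P.card)
    exact ⟨dist x y, x, hx, y, hy, hxy, rfl⟩
  have hcmem : c ∈ S := Set.Nonempty.csInf_mem hSne hSfin
  have hcpos : 0 < c := by
    obtain ⟨x, _, y, _, hxy, hcxy⟩ := hcmem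
    rw [hcxy]; exact dist_pos.mpr hxy
  have hcle : ∀ x ∈ P, ∀ y ∈ P, x ≠ y → c ≤ dist x y := by
    intro x hx y hy hxy
    exact csInf_le hSfin.bddBelow ⟨x, hx, y, hy, hxy, rfl⟩
  have hbdd : Bornology.IsBounded (P : Set (EuclideanSpace ℝ (Fin d))) :=
    (P.finite_toSet).isBounded
  have hDle : ∀ x ∈ P, ∀ y ∈ P, dist x y ≤ D := fun x hx y hy =>
    Metric.dist_le_diam_of_mem hbdd hx hy
  have hcD : c ≤ D := by
    obtain ⟨x, hx, y, hy, hxy, hcxy⟩ := hcmem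
    rw [hcxy]; exact hDle x hx y hy
  have hDpos : 0 < D := lt_of_lt_of_le hcpos hcD
  have hΦ1 : 1 ≤ Φ := by rw [hΦ, le_div_iff₀ hcpos, one_mul]; exact hcD
  set L := Real.logb 2 (2 * Φ) with hL
  have hL1 : 1 ≤ L := by
    rw [hL, show (1:ℝ) = Real.logb 2 2 from (Real.logb_self_eq_one (by norm_num)).symm]
    apply Real.logb_le_logb_of_le (by norm_num) (by norm_num)
    linarith
  have hLsplit : L = 1 + Real.logb 2 Φ := by
    rw [hL, Real.logb_mul (by norm_num) (by linarith), Real.logb_self_eq_one (by norm_num)]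
  have hlogΦ : 0 ≤ Real.logb 2 Φ := Real.logb_nonneg (by norm_num) hΦ1
  -- the integer scale count K
  have hflD := Real.floor_logb_natCast (b := 2) (r := D) hDpos.le
  have hflc := Real.floor_logb_natCast (b := 2) (r := c) hcpos.le
  norm_num at hflD hflc
  have hK : (((Int.log 2 D - Int.log 2 c : ℤ) : ℝ) + 1) ≤ 3 * L := by
    have h1 : ((Int.log 2 D : ℤ) : ℝ) ≤ Real.logb 2 D := by
      rw [← hflD]; exact Int.floor_le _
    have h2 : Real.logb 2 c - 1 ≤ ((Int.log 2 c : ℤ) : ℝ) := by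
      rw [← hflc]
      linarith [Int.sub_one_lt_floor (Real.logb 2 c)]
    have h3 : Real.logb 2 D - Real.logb 2 c = Real.logb 2 Φ := by
      rw [hΦ, Real.logb_div hDpos.ne' hcpos.ne']
    push_cast
    rw [hLsplit]
    linarith
  have hKnn : (0:ℝ) ≤ (((Int.log 2 D - Int.log 2 c : ℤ) : ℝ) + 1) := by
    have h0 := Int.log_mono_right (b := 2) hcpos hcD
    have h' : (0:ℤ) ≤ Int.log 2 D - Int.log 2 c + 1 := by omega
    push_cast
    exact_mod_cast h'
  -- nets
  have hQ : ∀ p : {x // x ∈ P}, ∀ s ∈ P.erase p.1, c ≤ dist p.1 s ∧ dist p.1 s ≤ D := by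
    intro p s hs
    obtain ⟨hne, hsP⟩ := Finset.mem_erase.mp hs
    exact ⟨hcle p.1 p.2 s hsP (Ne.symm hne), hDle p.1 p.2 s hsP⟩
  choose N₁ hN₁sub hN₁cov hN₁card using fun p : {x // x ∈ P} =>
    ring_cover d hd (P.erase p.1) p.1 (3/40) c D (by norm_num) hcpos
      (fun s hs => (hQ p s hs).1) (fun s hs => (hQ p s hs).2) hcD
  choose N₂ hN₂sub hN₂cov hN₂card using fun p : {x // x ∈ P} =>
    ring_cover d hd (P.erase p.1) p.1 (ε/4) c D (by positivity) hcpos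
      (fun s hs => (hQ p s hs).1) (fun s hs => (hQ p s hs).2) hcD
  set E₁ := P.attach.biUnion (fun p => (N₁ p).image (fun m => (p.1, m))) with hE₁
  set E₂ := P.attach.biUnion (fun p => (N₂ p).image (fun m => (p.1, m))) with hE₂
  have hmem : ∀ (N : {x // x ∈ P} → Finset (EuclideanSpace ℝ (Fin d))),
      (∀ p, N p ⊆ P.erase p.1) →
      ∀ e ∈ P.attach.biUnion (fun p => (N p).image (fun m => (p.1, m))),
        e.1 ∈ P ∧ e.2 ∈ P := by
    intro N hNsub e he
    obtain ⟨p, _, hei⟩ := Finset.mem_biUnion.mp he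
    obtain ⟨m, hm, rfl⟩ := Finset.mem_image.mp hei
    exact ⟨p.2, Finset.mem_of_mem_erase (hNsub p hm)⟩
  -- cardinality bounds
  have hcard : ∀ (N : {x // x ∈ P} → Finset (EuclideanSpace ℝ (Fin d))) (B : ℝ),
      0 ≤ B → (∀ p, ((N p).card : ℝ) ≤ B * (((Int.log 2 D - Int.log 2 c : ℤ) : ℝ) + 1)) →
      ((P.attach.biUnion (fun p => (N p).image (fun m => (p.1, m)))).card : ℝ) ≤
        B * P.card * (3 * L) := by
    intro N B hB hNB
    calc ((P.attach.biUnion (fun p => (N p).image (fun m => (p.1, m)))).card : ℝ)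
        ≤ ∑ p ∈ P.attach, (((N p).image (fun m => (p.1, m))).card : ℝ) := by
          exact_mod_cast Finset.card_biUnion_le
    _ ≤ ∑ p ∈ P.attach, ((N p).card : ℝ) := by
          apply Finset.sum_le_sum
          intro p _
          exact_mod_cast Finset.card_image_le
    _ ≤ ∑ p ∈ P.attach, B * (((Int.log 2 D - Int.log 2 c : ℤ) : ℝ) + 1) :=
          Finset.sum_le_sum (fun p _ => hNB p)
    _ = P.card * (B * (((Int.log 2 D - Int.log 2 c : ℤ) : ℝ) + 1)) := by
          rw [Finset.sum_const, Finset.card_attach, nsmul_eq_mul]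
    _ ≤ P.card * (B * (3 * L)) := by
          apply mul_le_mul_of_nonneg_left _ (Nat.cast_nonneg _)
          exact mul_le_mul_of_nonneg_left hK hB
    _ = B * P.card * (3 * L) := by ring
  refine ⟨E₁, E₂, hmem N₁ hN₁sub, hmem N₂ hN₂sub, ?_, ?_, ?_⟩
  · -- |E₁|
    have h55 : ((4 / (3/40 : ℝ) + 1)) ^ d ≤ (55:ℝ) ^ d :=
      pow_le_pow_left₀ (by norm_num) (by norm_num) d
    calc (E₁.card : ℝ) ≤ (55:ℝ) ^ d * P.card * (3 * L) :=
          hcard N₁ ((55:ℝ) ^ d) (by positivity) (fun p => le_trans (hN₁card p)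
            (mul_le_mul_of_nonneg_right h55 hKnn))
    _ = 3 * 55 ^ d * P.card * L := by ring
  · -- |E₂|
    have h44 : 4/(ε/4 : ℝ) + 1 ≤ 17/ε := by
      have e1 : 4/(ε/4 : ℝ) = 16/ε := by
        field_simp
        ring
      rw [e1, le_div_iff₀ hε0, add_mul, one_mul, div_mul_cancel₀ _ hε0.ne']
      linarith
    have h17 : ((4 / (ε/4 : ℝ) + 1)) ^ d ≤ (17:ℝ) ^ d / ε ^ d := by
      rw [← div_pow]
      exact pow_le_pow_left₀ (by positivity) h44 d
    calc (E₂.card : ℝ) ≤ ((17:ℝ) ^ d / ε ^ d) * P.card * (3 * L) :=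
          hcard N₂ ((17:ℝ) ^ d / ε ^ d) (by positivity) (fun p => le_trans (hN₂card p)
            (mul_le_mul_of_nonneg_right h17 hKnn))
    _ = (3 * 17 ^ d) / ε ^ d * P.card * L := by ring
    _ ≤ (3 * 55 ^ d) / ε ^ d * P.card * L := by
          apply mul_le_mul_of_nonneg_right _ (by linarith)
          apply mul_le_mul_of_nonneg_right _ (Nat.cast_nonneg _)
          apply div_le_div_of_nonneg_right _ (by positivity)
          · gcongr <;> norm_num
  · -- query guarantees
    intro q
    have hPne : (P : Set (EuclideanSpace ℝ (Fin d))).Nonempty := by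
      obtain ⟨x, hx, _⟩ := Finset.one_lt_card.mp (by omega : 1 < P.card)
      exact ⟨x, hx⟩
    obtain ⟨pstar, hpstar, hdstar⟩ :=
      (P.finite_toSet.isCompact).exists_infDist_eq_dist hPne q
    set δ := Metric.infDist q (P : Set (EuclideanSpace ℝ (Fin d))) with hδ
    have hδ0 : 0 ≤ δ := Metric.infDist_nonneg
    constructor
    · intro p hp hfar
      have hδr : 3 * δ < 2 * dist q p := by linarith
      have hppstar : pstar ≠ p := by
        rintro rfl
        rw [← hdstar] at hfar
        linarith
      have hpsQ : pstar ∈ P.erase p := Finset.mem_erase.mpr ⟨hppstar, hpstar⟩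
      obtain ⟨m, hm, hdm⟩ := hN₁cov ⟨p, hp⟩ pstar hpsQ
      refine ⟨m, ?_, ?_⟩
      · exact Finset.mem_biUnion.mpr ⟨⟨p, hp⟩, Finset.mem_attach _ _,
          Finset.mem_image_of_mem _ hm⟩
      · have ht1 : dist p pstar ≤ dist p q + dist q pstar := dist_triangle _ _ _
        have ht2 : dist q m ≤ dist q pstar + dist pstar m := dist_triangle _ _ _
        rw [dist_comm p q] at ht1
        rw [← hdstar] at ht1 ht2
        linarith
    · intro p hp hfar hnear
      have hδpos : 0 < δ := by nlinarith
      have hppstar : pstar ≠ p := by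
        rintro rfl
        rw [← hdstar] at hfar
        nlinarith
      have hpsQ : pstar ∈ P.erase p := Finset.mem_erase.mpr ⟨hppstar, hpstar⟩
      obtain ⟨m, hm, hdm⟩ := hN₂cov ⟨p, hp⟩ pstar hpsQ
      refine ⟨m, ?_, ?_⟩
      · exact Finset.mem_biUnion.mpr ⟨⟨p, hp⟩, Finset.mem_attach _ _,
          Finset.mem_image_of_mem _ hm⟩
      · have ht1 : dist p pstar ≤ dist p q + dist q pstar := dist_triangle _ _ _
        have ht2 : dist q m ≤ dist q pstar + dist pstar m := dist_triangle _ _ _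
        rw [dist_comm p q] at ht1
        rw [← hdstar] at ht1 ht2
        have hd4 : dist p pstar ≤ 4 * δ := by linarith
        have : (ε/4) * dist p pstar ≤ (ε/4) * (4 * δ) := by
          apply mul_le_mul_of_nonneg_left hd4 (by positivity)
        nlinarith
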